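/- Let f ∈ B̂ with D, δ, tracts and fundamental domains fixed as in the context. Then every dynamic ray g of f is asymptotically contained in some fundamental domain: there exist a fundamental domain F and t₀ > 0 such that g(t) ∈ F for all t > t₀. -/

import Mathlib

open Filter Topology Set Metric

noncomputable section

/-- The set of critical values of `f`. -/
def criticalValues (f : ℂ → ℂ) : Set ℂ := {v | ∃ c : ℂ, deriv f c = 0 ∧ f c = v}

/-- The set of asymptotic values of `f`. -/
def asymptoticValues (f : ℂ → ℂ) : Set ℂ :=
  {a | ∃ γ : ℝ → ℂ, Continuous γ ∧ Tendsto (fun t => ‖γ t‖) atTop atTop ∧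
      Tendsto (fun t => f (γ t)) atTop (nhds a)}

/-- The set of singular values of `f`: the closure of the union of critical and
asymptotic values. -/
def singularValues (f : ℂ → ℂ) : Set ℂ := closure (criticalValues f ∪ asymptoticValues f)

/-- `f` is entire and transcendental (entire and not a polynomial). -/
def IsEntireTranscendental (f : ℂ → ℂ) : Prop :=
  Differentiable ℂ f ∧ ¬ ∃ p : Polynomial ℂ, f = fun z => p.eval z

/-- The Eremenko–Lyubich class `B`: entire transcendental maps with bounded singular set. -/
def ClassB (f : ℂ → ℂ) : Prop :=
  IsEntireTranscendental f ∧ Bornology.IsBounded (singularValues f)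

/-- `f` has finite order: `log log |f z| = O(log |z|)` as `|z| → ∞`. -/
def FiniteOrder (f : ℂ → ℂ) : Prop :=
  ∃ C R : ℝ, ∀ z : ℂ, R ≤ ‖z‖ → Real.log (Real.log ‖f z‖) ≤ C * Real.log ‖z‖

/-- The class `B̂`: finite compositions of finite-order maps of class `B`. -/
def ClassBhat (f : ℂ → ℂ) : Prop :=
  ∃ l : List (ℂ → ℂ), l ≠ [] ∧ (∀ g ∈ l, ClassB g ∧ FiniteOrder g) ∧
    f = l.foldr (fun g h => g ∘ h) id

/-- The escaping set of `f`. -/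
def escapingSet (f : ℂ → ℂ) : Set ℂ :=
  {z | Tendsto (fun n : ℕ => ‖f^[n] z‖) atTop atTop}

/-- The defining properties of a dynamic-ray curve `g` on the interval `(a, ∞)`:
it is an injective curve in the escaping set, every iterate tends to `∞` as `t → ∞`,
and the iterates tend to `∞` uniformly on each `[t₀, ∞)` with `t₀ > a`. -/
def RayProps (f : ℂ → ℂ) (g : ℝ → ℂ) (a : ℝ) : Prop :=
  ContinuousOn g (Ioi a) ∧ InjOn g (Ioi a) ∧
  (∀ t ∈ Ioi a, g t ∈ escapingSet f) ∧
  (∀ n : ℕ, Tendsto (fun t => ‖f^[n] (g t)‖) atTop atTop) ∧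
  (∀ t₀ ∈ Ioi a, ∀ M : ℝ, ∃ N : ℕ, ∀ n ≥ N, ∀ t ≥ t₀, M ≤ ‖f^[n] (g t)‖)

/-- A dynamic ray of `f`: a maximal curve `(a, ∞) → I(f)` with the ray properties;
`a > 0` only for broken rays, i.e. when the endpoint is a singular value or a
preimage of a singular value. -/
structure DynamicRay (f : ℂ → ℂ) where
  toFun : ℝ → ℂ
  a : ℝ
  a_nonneg : 0 ≤ a
  props : RayProps f toFun a
  maximal : ∀ b < a, ∀ h : ℝ → ℂ, EqOn h toFun (Ioi a) → RayProps f h b →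
      ∃ n : ℕ, f^[n] (h a) ∈ singularValues f
  broken : 0 < a → ∃ n : ℕ, f^[n] (toFun a) ∈ singularValues f

/-- The trace (image) of a dynamic ray. -/
def DynamicRay.image {f : ℂ → ℂ} (r : DynamicRay f) : Set ℂ := r.toFun '' Ioi r.a

/-- A ray lands at `z₀` if it is unbroken and `g(t) → z₀` as `t → 0⁺`. -/
def DynamicRay.Lands {f : ℂ → ℂ} (r : DynamicRay f) (z₀ : ℂ) : Prop :=
  r.a = 0 ∧ Tendsto r.toFun (nhdsWithin 0 (Ioi 0)) (nhds z₀)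

/-- A ray is fixed if `f(g) ⊆ g`. -/
def DynamicRay.IsFixed {f : ℂ → ℂ} (r : DynamicRay f) : Prop := f '' r.image ⊆ r.image

/-- A ray is invariant under `f^p` (`p`-periodic) if `f^p(g) ⊆ g`. -/
def DynamicRay.IsInvariant {f : ℂ → ℂ} (r : DynamicRay f) (p : ℕ) : Prop :=
  f^[p] '' r.image ⊆ r.image

/-- Every fixed ray of `f` lands. -/
def AllFixedRaysLand (f : ℂ → ℂ) : Prop :=
  ∀ r : DynamicRay f, r.IsFixed → ∃ z : ℂ, r.Lands z

/-- Every periodic ray of `f` lands. -/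
def AllPeriodicRaysLand (f : ℂ → ℂ) : Prop :=
  ∀ p : ℕ, 1 ≤ p → ∀ r : DynamicRay f, r.IsInvariant p → ∃ z : ℂ, r.Lands z

/-- A fixed ray lands alone at a repelling fixed point: it lands at a repelling
fixed point at which no other fixed ray lands. -/
def LandsAloneAtRepelling (f : ℂ → ℂ) (r : DynamicRay f) : Prop :=
  ∃ z : ℂ, r.Lands z ∧ f z = z ∧ 1 < ‖deriv f z‖ ∧
    ∀ r' : DynamicRay f, r'.IsFixed → r'.Lands z → r'.image = r.image

/-- The graph `Γ`: the union of all fixed rays together with their landing points. -/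
def fixedRayGraph (f : ℂ → ℂ) : Set ℂ :=
  {w | ∃ r : DynamicRay f, r.IsFixed ∧ (w ∈ r.image ∨ r.Lands w)}

/-- A basic region: a connected component of the complement of `Γ`. -/
def IsBasicRegion (f : ℂ → ℂ) (V : Set ℂ) : Prop :=
  ∃ z ∈ (fixedRayGraph f)ᶜ, V = connectedComponentIn (fixedRayGraph f)ᶜ z

/-- The graph `Γ_p`: the union of all rays invariant under `f^p` together with their
landing points. -/
def periodicRayGraph (f : ℂ → ℂ) (p : ℕ) : Set ℂ :=
  {w | ∃ r : DynamicRay f, r.IsInvariant p ∧ (w ∈ r.image ∨ r.Lands w)}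

/-- A basic region for `f^p`: a connected component of the complement of `Γ_p`. -/
def IsBasicRegionPer (f : ℂ → ℂ) (p : ℕ) (V : Set ℂ) : Prop :=
  ∃ z ∈ (periodicRayGraph f p)ᶜ, V = connectedComponentIn (periodicRayGraph f p)ᶜ z

/-- An interior fixed point: a fixed point at which no fixed ray lands. -/
def InteriorFixedPoint (f : ℂ → ℂ) (z : ℂ) : Prop :=
  f z = z ∧ ∀ r : DynamicRay f, r.IsFixed → ¬ r.Lands z

/-- An interior `p`-periodic point: a fixed point of `f^p` at which no ray invariant
under `f^p` lands. -/
def InteriorPeriodicPoint (f : ℂ → ℂ) (p : ℕ) (z : ℂ) : Prop :=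
  f^[p] z = z ∧ ∀ r : DynamicRay f, r.IsInvariant p → ¬ r.Lands z

/-- The parabolic basin of the fixed point `z₀`. -/
def parabolicBasin (f : ℂ → ℂ) (z₀ : ℂ) : Set ℂ :=
  {z | Tendsto (fun n : ℕ => f^[n] z) atTop (nhds z₀) ∧ ∀ n : ℕ, f^[n] z ≠ z₀}

/-- A virtual fixed point: an `f`-invariant connected component of the parabolic
basin of a multiple fixed point (an immediate parabolic basin). -/
def IsVirtualFixedPoint (f : ℂ → ℂ) (U : Set ℂ) : Prop :=
  ∃ z₀ : ℂ, f z₀ = z₀ ∧ deriv f z₀ = 1 ∧ f ≠ id ∧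
    (∃ z ∈ parabolicBasin f z₀, U = connectedComponentIn (parabolicBasin f z₀) z) ∧
    f '' U ⊆ U

/-- A virtual `p`-periodic point: an `f^p`-invariant immediate parabolic basin of a
parabolic point fixed by `f^p` with `(f^p)'(z₀) = 1`. -/
def IsVirtualPeriodicPoint (f : ℂ → ℂ) (p : ℕ) (U : Set ℂ) : Prop :=
  ∃ z₀ : ℂ, f^[p] z₀ = z₀ ∧ deriv (f^[p]) z₀ = 1 ∧
    (∃ z ∈ parabolicBasin (f^[p]) z₀,
      U = connectedComponentIn (parabolicBasin (f^[p]) z₀) z) ∧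
    f^[p] '' U ⊆ U

/-- The multiplicity of `z` as a fixed point of `f`: its order as a zero of `f(w) - w`. -/
noncomputable def fixedPointOrder (f : ℂ → ℂ) (z : ℂ) : ℕ := by
  classical exact if h : AnalyticAt ℂ (fun w => f w - w) z then (analyticOrderAt (fun w => f w - w) z).toNat else 0

/-- A Jordan domain: a bounded connected open set whose frontier is a Jordan curve. -/
def IsJordanDomain (D : Set ℂ) : Prop :=
  IsOpen D ∧ IsConnected D ∧ Bornology.IsBounded D ∧
  ∃ γ : ℂ → ℂ, ContinuousOn γ (sphere (0:ℂ) 1) ∧ InjOn γ (sphere (0:ℂ) 1) ∧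
    γ '' sphere (0:ℂ) 1 = frontier D

/-- The frontier of `D` is a real-analytic Jordan curve. -/
def HasAnalyticBoundary (D : Set ℂ) : Prop :=
  ∃ γ : ℂ → ℂ, AnalyticOnNhd ℂ γ (sphere (0:ℂ) 1) ∧ InjOn γ (sphere (0:ℂ) 1) ∧
    γ '' sphere (0:ℂ) 1 = frontier D

/-- The union `𝒯` of all tracts: the preimage of the complement of `D̄`. -/
def tractSet (f : ℂ → ℂ) (D : Set ℂ) : Set ℂ := f ⁻¹' (closure D)ᶜ

/-- A tract of `f`: a connected component of `𝒯`. -/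
def IsTract (f : ℂ → ℂ) (D : Set ℂ) (T : Set ℂ) : Prop :=
  ∃ z ∈ tractSet f D, T = connectedComponentIn (tractSet f D) z

/-- `δ` is an admissible cut curve: a simple curve in `ℂ \ (D̄ ∪ 𝒯̄)` connecting
`∂D` to infinity. -/
def IsAdmissibleDelta (f : ℂ → ℂ) (D : Set ℂ) (δ : Set ℂ) : Prop :=
  ∃ c : ℝ → ℂ, ContinuousOn c (Ici 0) ∧ InjOn c (Ici 0) ∧ c 0 ∈ frontier D ∧
    (∀ t : ℝ, 0 < t → c t ∈ (closure D ∪ closure (tractSet f D))ᶜ) ∧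
    Tendsto (fun t => ‖c t‖) atTop atTop ∧ δ = c '' Ici 0

/-- A fundamental domain of `f` (relative to `D` and `δ`): a connected component of
`𝒯 \ f⁻¹(δ)`. -/
def IsFundamentalDomain (f : ℂ → ℂ) (D δ : Set ℂ) (F : Set ℂ) : Prop :=
  ∃ z ∈ tractSet f D \ f ⁻¹' δ, F = connectedComponentIn (tractSet f D \ f ⁻¹' δ) z

/-- A ray is asymptotically contained in `F` if `g(t) ∈ F` for all sufficiently large `t`. -/
def AsympContained {f : ℂ → ℂ} (r : DynamicRay f) (F : Set ℂ) : Prop :=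
  ∃ t₀ : ℝ, ∀ t : ℝ, t₀ < t → r.toFun t ∈ F

/-- Every dynamic ray is asymptotically contained in some fundamental domain. -/
theorem ray_asymptotically_contained (f : ℂ → ℂ) (hf : ClassBhat f) (D : Set ℂ)
    (hD : IsJordanDomain D) (hsing : singularValues f ⊆ D)
    (h0 : (0:ℂ) ∈ D) (hf0 : f 0 ∈ D)
    (δ : Set ℂ) (hδ : IsAdmissibleDelta f D δ) :
    ∀ r : DynamicRay f, ∃ (F : Set ℂ) (t₀ : ℝ), 0 < t₀ ∧
      IsFundamentalDomain f D δ F ∧ ∀ t : ℝ, t₀ < t → r.toFun t ∈ F := by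
  intro r
  obtain ⟨hcont, hinj, hesc, htend, hunif⟩ := r.props
  -- bound on closure D
  obtain ⟨M, hM⟩ := hD.2.2.1.closure.exists_norm_le
  -- eventually ‖f (g t)‖ > M and ‖f^[2] (g t)‖ > M
  have h1 := (htend 1).eventually_gt_atTop M
  have h2 := (htend 2).eventually_gt_atTop M
  obtain ⟨T, hT⟩ := ((h1.and h2).and (eventually_gt_atTop (r.a))).exists_forall_of_atTop
  set t₀ : ℝ := max T (r.a + 1) with ht₀def
  have ht₀pos : 0 < t₀ := lt_of_lt_of_le (by linarith [r.a_nonneg]) (le_max_right _ _)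
  -- key: for t > t₀, g t ∈ tractSet \ f⁻¹' δ
  have hkey : ∀ t : ℝ, t₀ < t → r.toFun t ∈ tractSet f D \ f ⁻¹' δ := by
    intro t ht
    have hT' := hT t (le_of_lt (lt_of_le_of_lt (le_max_left _ _) ht))
    obtain ⟨⟨hn1, hn2⟩, -⟩ := hT'
    have hg1 : f (r.toFun t) ∉ closure D := by
      intro hmem
      have := hM _ hmem
      rw [Function.iterate_one] at hn1
      linarith
    have hg2 : f (f (r.toFun t)) ∉ closure D := by
      intro hmem
      have := hM _ hmem
      have : ‖f^[2] (r.toFun t)‖ ≤ M := by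
        simpa [Function.iterate_succ, Function.comp] using this
      linarith
    refine ⟨hg1, ?_⟩
    -- f (g t) ∉ δ
    intro hδmem
    obtain ⟨c, hccont, hcinj, hc0, hcout, hctend, hceq⟩ := hδ
    rw [hceq] at hδmem
    obtain ⟨s, hs, hsc⟩ := hδmem
    rcases eq_or_lt_of_le (mem_Ici.mp hs) with hs0 | hspos
    · -- s = 0 : c 0 ∈ frontier D ⊆ closure D
      apply hg1
      rw [← hsc, ← hs0]
      exact frontier_subset_closure hc0
    · -- s > 0 : c s ∉ closure (tractSet f D), but f (g t) ∈ tractSet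
      have hft : f (r.toFun t) ∈ tractSet f D := hg2
      have := hcout s hspos
      rw [hsc] at this
      exact this (Or.inr (subset_closure hft))
  -- the image g '' Ioi t₀ is connected, inside the set
  have hat₀ : r.a < t₀ := lt_of_lt_of_le (by linarith) (le_max_right _ _)
  have hsubIoi : Ioi t₀ ⊆ Ioi r.a := fun x hx => lt_trans hat₀ hx
  have hconn : IsPreconnected (r.toFun '' Ioi t₀) :=
    (isPreconnected_Ioi).image _ (hcont.mono hsubIoi)
  have hz : r.toFun (t₀ + 1) ∈ tractSet f D \ f ⁻¹' δ := hkey _ (by linarith)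
  refine ⟨connectedComponentIn (tractSet f D \ f ⁻¹' δ) (r.toFun (t₀ + 1)), t₀,
    ht₀pos, ⟨r.toFun (t₀ + 1), hz, rfl⟩, ?_⟩
  intro t ht
  have hsub : r.toFun '' Ioi t₀ ⊆ connectedComponentIn (tractSet f D \ f ⁻¹' δ)
      (r.toFun (t₀ + 1)) := by
    apply hconn.subset_connectedComponentIn
    · exact ⟨t₀ + 1, by simp, rfl⟩
    · rintro x ⟨s, hs, rfl⟩
      exact hkey s hs
  exact hsub ⟨t, ht, rfl⟩
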